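/- Let H be a Hilbert space and let (f_i)_{i=1}^∞ be a sequence in H that can be partitioned into three families (g_i)_{i=1}^∞, (h_i)_{i∈Γ} (Γ finite or infinite), and (k_i)_{i=1}^n (n a natural number) such that: (g_i)_{i=1}^∞ is a Riesz basis for H; each k_i has infinite support with respect to (g_i); and there is a natural number m such that, setting G = span(g_1,…,g_m) and writing h_i = h_i¹ + h_i² with h_i² ∈ G and h_i¹ ∈ G^⊥, one has Σ_{i∈Γ} ‖h_i²‖² < ∞ and ((g_i)_{i=1}^∞, (h_i¹)_{i∈Γ}) is a Riesz frame for H. Then (f_i)_{i=1}^∞ is a frame for H with the subframe property. -/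

import Mathlib

open scoped ComplexInnerProductSpace
open Submodule Filter

noncomputable section

variable {H : Type*} [NormedAddCommGroup H] [InnerProductSpace ℂ H] [CompleteSpace H]

/-- The closed linear span of a set of vectors. -/
def closedSpan (s : Set H) : Submodule ℂ H := (Submodule.span ℂ s).topologicalClosure

/-- `f` is a frame for the closed subspace `K` with frame bounds `A`, `B`. -/
def IsFrameFor {ι : Type*} (f : ι → H) (K : Submodule ℂ H) (A B : ℝ) : Prop :=
  (∀ i, f i ∈ K) ∧ ∀ g ∈ K,
    Summable (fun i => ‖⟪g, f i⟫‖ ^ 2) ∧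
    A * ‖g‖ ^ 2 ≤ ∑' i, ‖⟪g, f i⟫‖ ^ 2 ∧
    ∑' i, ‖⟪g, f i⟫‖ ^ 2 ≤ B * ‖g‖ ^ 2

/-- `f` is a frame for the closed linear span of its terms, with bounds `A`, `B`. -/
def IsFrameSequence {ι : Type*} (f : ι → H) (A B : ℝ) : Prop :=
  IsFrameFor f (closedSpan (Set.range f)) A B

/-- Riesz frame with given uniform (Riesz frame) bounds. -/
def IsRieszFrameWith {ι : Type*} (f : ι → H) (A B : ℝ) : Prop :=
  closedSpan (Set.range f) = ⊤ ∧
  ∀ Δ : Set ι, IsFrameSequence (fun i : Δ => f i) A B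

def IsRieszFrame {ι : Type*} (f : ι → H) : Prop :=
  ∃ A B : ℝ, 0 < A ∧ 0 < B ∧ IsRieszFrameWith f A B

def HasSubframeProperty {ι : Type*} (f : ι → H) : Prop :=
  ∀ Δ : Set ι, ∃ A B : ℝ, 0 < A ∧ 0 < B ∧ IsFrameSequence (fun i : Δ => f i) A B

/-- Riesz basis for the whole space. -/
def IsRieszBasis {ι : Type*} (g : ι → H) : Prop :=
  closedSpan (Set.range g) = ⊤ ∧ ∃ c C : ℝ, 0 < c ∧ 0 < C ∧
    ∀ a : ι →₀ ℂ,
      c * Real.sqrt (∑ i ∈ a.support, ‖a i‖ ^ 2) ≤ ‖∑ i ∈ a.support, a i • g i‖ ∧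
      ‖∑ i ∈ a.support, a i • g i‖ ≤ C * Real.sqrt (∑ i ∈ a.support, ‖a i‖ ^ 2)

/-- The orthogonal projection of `H` onto the closed linear span of `s`, as a map `H → H`. -/
def projSpan (s : Set H) : H →L[ℂ] H :=
  haveI : CompleteSpace (closedSpan s : Submodule ℂ H) :=
    (Submodule.isClosed_topologicalClosure _).completeSpace_coe
  (closedSpan s).subtypeL.comp (orthogonalProjection (closedSpan s))



section OpAux

variable {H : Type*} [NormedAddCommGroup H] [InnerProductSpace ℂ H] [CompleteSpace H]
variable {E : Type*} [NormedAddCommGroup E] [InnerProductSpace ℂ E] [CompleteSpace E]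

/-- The `H`-valued orthogonal projection onto a closed submodule. -/
def projCLM (M : Submodule ℂ H) (hM : IsClosed (M : Set H)) : H →L[ℂ] H :=
  haveI : CompleteSpace M := hM.completeSpace_coe
  M.subtypeL.comp (orthogonalProjection M)

lemma projCLM_mem (M : Submodule ℂ H) (hM : IsClosed (M : Set H)) (x : H) :
    projCLM M hM x ∈ M := by
  haveI : CompleteSpace M := hM.completeSpace_coe
  exact (orthogonalProjection M x).2

lemma sub_projCLM_mem_orthogonal (M : Submodule ℂ H) (hM : IsClosed (M : Set H)) (x : H) :
    x - projCLM M hM x ∈ Mᗮ := by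
  haveI : CompleteSpace M := hM.completeSpace_coe
  exact Submodule.sub_starProjection_mem_orthogonal x

lemma projCLM_apply_of_mem (M : Submodule ℂ H) (hM : IsClosed (M : Set H)) {x : H}
    (hx : x ∈ M) : projCLM M hM x = x := by
  haveI : CompleteSpace M := hM.completeSpace_coe
  exact Submodule.starProjection_eq_self_iff.mpr hx

lemma projCLM_apply_of_mem_orthogonal (M : Submodule ℂ H) (hM : IsClosed (M : Set H)) {x : H}
    (hx : x ∈ Mᗮ) : projCLM M hM x = 0 := by
  haveI : CompleteSpace M := hM.completeSpace_coe
  show (↑(orthogonalProjection M x) : H) = 0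
  rw [Submodule.orthogonalProjectionOnto_apply_of_mem_orthogonal hx]
  rfl

lemma norm_projCLM_le (M : Submodule ℂ H) (hM : IsClosed (M : Set H)) (x : H) :
    ‖projCLM M hM x‖ ≤ ‖x‖ := by
  haveI : CompleteSpace M := hM.completeSpace_coe
  show ‖(↑(orthogonalProjection M x) : H)‖ ≤ ‖x‖
  have := (orthogonalProjection M).le_opNorm x
  calc ‖(↑(orthogonalProjection M x) : H)‖ = ‖orthogonalProjection M x‖ := rfl
    _ ≤ ‖orthogonalProjection M‖ * ‖x‖ := (orthogonalProjection M).le_opNorm x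
    _ ≤ 1 * ‖x‖ := by
        exact mul_le_mul_of_nonneg_right (orthogonalProjection_norm_le _) (norm_nonneg x)
    _ = ‖x‖ := one_mul _

/-- A closed submodule plus a finite-dimensional submodule of its orthogonal complement
is closed. -/
lemma isClosed_coe_sup_of_orthogonal (M V : Submodule ℂ H) (hM : IsClosed (M : Set H))
    [FiniteDimensional ℂ V] (hVM : V ≤ Mᗮ) :
    IsClosed ((M ⊔ V : Submodule ℂ H) : Set H) := by
  have hset : ((M ⊔ V : Submodule ℂ H) : Set H)
      = (fun x => x - projCLM M hM x) ⁻¹' (V : Set H) := by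
    ext x
    simp only [Set.mem_preimage, SetLike.mem_coe]
    constructor
    · intro hx
      rcases Submodule.mem_sup.mp hx with ⟨m, hm, v, hv, rfl⟩
      have h1 : projCLM M hM (m + v) = m := by
        rw [map_add, projCLM_apply_of_mem M hM hm,
          projCLM_apply_of_mem_orthogonal M hM (hVM hv), add_zero]
      rw [h1]
      simpa using hv
    · intro hx
      have h2 : x = projCLM M hM x + (x - projCLM M hM x) := by abel
      rw [h2]
      exact Submodule.mem_sup.mpr ⟨_, projCLM_mem M hM x, _, hx, rfl⟩
  rw [hset]
  exact (Submodule.closed_of_finiteDimensional V).preimage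
    (continuous_id.sub (projCLM M hM).continuous)

/-- A closed submodule plus a finite-dimensional submodule is closed. -/
lemma isClosed_coe_sup_fd (M V : Submodule ℂ H) (hM : IsClosed (M : Set H))
    [FiniteDimensional ℂ V] : IsClosed ((M ⊔ V : Submodule ℂ H) : Set H) := by
  set p : H →ₗ[ℂ] H := (LinearMap.id : H →ₗ[ℂ] H) - (projCLM M hM : H →ₗ[ℂ] H) with hp
  have hpapply : ∀ x : H, p x = x - projCLM M hM x := fun x => rfl
  set V' : Submodule ℂ H := V.map p with hV'
  haveI : FiniteDimensional ℂ V' := Module.Finite.map V p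
  have hV'M : V' ≤ Mᗮ := by
    rintro _ ⟨v, hv, rfl⟩
    rw [hpapply]
    exact sub_projCLM_mem_orthogonal M hM v
  have hsup : M ⊔ V = M ⊔ V' := by
    apply le_antisymm
    · refine sup_le le_sup_left fun v hv => ?_
      have h2 : v = projCLM M hM v + p v := by rw [hpapply]; abel
      rw [h2]
      exact Submodule.add_mem _ (Submodule.mem_sup_left (projCLM_mem M hM v))
        (Submodule.mem_sup_right ⟨v, hv, rfl⟩)
    · refine sup_le le_sup_left ?_
      rintro _ ⟨v, hv, rfl⟩
      rw [hpapply]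
      exact Submodule.sub_mem _ (Submodule.mem_sup_right hv)
        (Submodule.mem_sup_left (projCLM_mem M hM v))
  rw [hsup]
  exact isClosed_coe_sup_of_orthogonal M V' hM hV'M

/-- A submodule containing a closed submodule of finite codimension is closed. -/
lemma isClosed_coe_of_le (N S : Submodule ℂ H) (hN : IsClosed (N : Set H))
    [FiniteDimensional ℂ ↥Nᗮ] (hNS : N ≤ S) : IsClosed (S : Set H) := by
  haveI : FiniteDimensional ℂ ↥(S ⊓ Nᗮ) :=
    Submodule.finiteDimensional_of_le (inf_le_right : S ⊓ Nᗮ ≤ Nᗮ)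
  have hS : S = N ⊔ (S ⊓ Nᗮ) := by
    apply le_antisymm
    · intro x hx
      have h2 : x = projCLM N hN x + (x - projCLM N hN x) := by abel
      rw [h2]
      refine Submodule.add_mem _ (Submodule.mem_sup_left (projCLM_mem N hN x))
        (Submodule.mem_sup_right ⟨?_, sub_projCLM_mem_orthogonal N hN x⟩)
      exact Submodule.sub_mem _ hx (hNS (projCLM_mem N hN x))
    · exact sup_le hNS inf_le_left
  rw [hS]
  exact isClosed_coe_sup_of_orthogonal N (S ⊓ Nᗮ) hN inf_le_right

end OpAux
section OpAux2

variable {H : Type*} [NormedAddCommGroup H] [InnerProductSpace ℂ H] [CompleteSpace H]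
variable {E : Type*} [NormedAddCommGroup E] [InnerProductSpace ℂ E] [CompleteSpace E]

/-- A continuous linear map with closed range is bounded below on the orthogonal
complement of its kernel. -/
lemma exists_norm_le_of_isClosed_range (T : H →L[ℂ] E) (hT : IsClosed (Set.range T)) :
    ∃ c : ℝ, 0 < c ∧ ∀ x ∈ (T.ker)ᗮ, ‖x‖ ≤ c * ‖T x‖ := by
  set K := T.ker with hK
  have hKc : IsClosed (K : Set H) := ContinuousLinearMap.isClosed_ker T
  haveI : CompleteSpace K := hKc.completeSpace_coe
  haveI : CompleteSpace ↥Kᗮ := K.isClosed_orthogonal.completeSpace_coe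
  haveI : CompleteSpace ↥(T.range) := by
    have h1 : ((T.range : Submodule ℂ E) : Set E) = Set.range T :=
      LinearMap.coe_range _
    exact (show IsClosed ((T.range : Submodule ℂ E) : Set E) by rw [h1]; exact hT).completeSpace_coe
  set T₁ : ↥Kᗮ →L[ℂ] ↥(T.range) :=
    (T.comp (Kᗮ.subtypeL)).codRestrict (T.range)
      (fun x => LinearMap.mem_range_self _ _) with hT₁
  have hT₁app : ∀ x : ↥Kᗮ, ((T₁ x : E)) = T x.1 := fun x => rfl
  have hker : T₁.ker = ⊥ := by
    rw [Submodule.eq_bot_iff]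
    intro x hx
    have h1 : T x.1 = 0 := by
      have := congrArg (Subtype.val) (LinearMap.mem_ker.mp hx)
      simpa [hT₁app] using this
    have h2 : x.1 ∈ K := LinearMap.mem_ker.mpr h1
    have h3 : x.1 = 0 := by
      have := Submodule.orthogonal_disjoint K
      exact (Submodule.disjoint_def.mp this) x.1 h2 x.2
    exact Subtype.ext h3
  have hrange : T₁.range = ⊤ := by
    rw [LinearMap.range_eq_top]
    rintro ⟨y, hy⟩
    obtain ⟨z, hz⟩ := hy
    refine ⟨⟨z - projCLM K hKc z, sub_projCLM_mem_orthogonal K hKc z⟩, ?_⟩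
    apply Subtype.ext
    show T (z - projCLM K hKc z) = y
    rw [map_sub, (show T (projCLM K hKc z) = 0 from LinearMap.mem_ker.mp (projCLM_mem K hKc z)), sub_zero]
    exact hz
  set e := ContinuousLinearEquiv.ofBijective T₁ hker hrange with he
  refine ⟨‖(e.symm : ↥(T.range) →L[ℂ] ↥Kᗮ)‖ + 1, by positivity, fun x hx => ?_⟩
  have h1 : e.symm (e ⟨x, hx⟩) = ⟨x, hx⟩ := e.symm_apply_apply _
  have h2 : (e : ↥Kᗮ →L[ℂ] ↥(T.range)) = T₁ := rfl
  calc ‖x‖ = ‖(⟨x, hx⟩ : ↥Kᗮ)‖ := rfl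
    _ = ‖e.symm (e ⟨x, hx⟩)‖ := by rw [h1]
    _ ≤ ‖(e.symm : ↥(T.range) →L[ℂ] ↥Kᗮ)‖ * ‖e ⟨x, hx⟩‖ :=
        (e.symm : ↥(T.range) →L[ℂ] ↥Kᗮ).le_opNorm _
    _ = ‖(e.symm : ↥(T.range) →L[ℂ] ↥Kᗮ)‖ * ‖T x‖ := by
        congr 1
    _ ≤ (‖(e.symm : ↥(T.range) →L[ℂ] ↥Kᗮ)‖ + 1) * ‖T x‖ := by
        exact mul_le_mul_of_nonneg_right (by linarith) (norm_nonneg _)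

/-- The image of a closed submodule under a map bounded below on it is closed. -/
lemma isClosed_image_of_bound (T : H →L[ℂ] E) (D : Submodule ℂ H) (hD : IsClosed (D : Set H))
    {c : ℝ} (hc : 0 < c) (hb : ∀ x ∈ D, ‖x‖ ≤ c * ‖T x‖) :
    IsClosed (T '' (D : Set H)) := by
  haveI : CompleteSpace D := hD.completeSpace_coe
  have h1 : AntilipschitzWith (⟨c, hc.le⟩ : NNReal) (T.comp D.subtypeL) := by
    apply (T.comp D.subtypeL).antilipschitz_of_bound
    intro x
    exact hb x.1 x.2
  have h2 := h1.isClosed_range (T.comp D.subtypeL).uniformContinuous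
  have h3 : Set.range (T.comp D.subtypeL) = T '' (D : Set H) := by
    ext y
    constructor
    · rintro ⟨x, rfl⟩; exact ⟨x.1, x.2, rfl⟩
    · rintro ⟨x, hx, rfl⟩; exact ⟨⟨x, hx⟩, rfl⟩
  rwa [h3] at h2

/-- **Closed range is stable under finite-rank perturbations.** -/
theorem isClosed_range_add_finiteRank (T F : H →L[ℂ] E) (hT : IsClosed (Set.range T))
    (hF : FiniteDimensional ℂ ↥(F.range)) :
    IsClosed (Set.range ((T + F : H →L[ℂ] E))) := by
  classical
  haveI := hF
  set N := F.ker with hN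
  have hNc : IsClosed (N : Set H) := ContinuousLinearMap.isClosed_ker F
  haveI : CompleteSpace N := hNc.completeSpace_coe
  haveI hfinNperp : FiniteDimensional ℂ ↥Nᗮ := by
    set φ : ↥Nᗮ →ₗ[ℂ] ↥(F.range) :=
      LinearMap.codRestrict (F.range) ((F : H →ₗ[ℂ] E).domRestrict Nᗮ)
        (fun x => LinearMap.mem_range_self _ _) with hφ
    have hinj : Function.Injective φ := by
      intro x y hxy
      have h1 : F x.1 = F y.1 := congrArg Subtype.val hxy
      have h2 : (x.1 - y.1) ∈ N := by
        apply LinearMap.mem_ker.mpr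
        rw [map_sub, sub_eq_zero]
        exact h1
      have h3 : (x.1 - y.1) ∈ Nᗮ := Submodule.sub_mem _ x.2 y.2
      have h4 : x.1 - y.1 = 0 :=
        (Submodule.disjoint_def.mp (Submodule.orthogonal_disjoint N)) _ h2 h3
      exact Subtype.ext (sub_eq_zero.mp h4)
    exact FiniteDimensional.of_injective φ hinj
  set K := T.ker with hK
  have hKc : IsClosed (K : Set H) := ContinuousLinearMap.isClosed_ker T
  obtain ⟨c, hc, hbd⟩ := exists_norm_le_of_isClosed_range T hT
  have hNK : IsClosed ((N ⊔ K : Submodule ℂ H) : Set H) :=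
    isClosed_coe_of_le N (N ⊔ K) hNc le_sup_left
  set D := (N ⊔ K) ⊓ Kᗮ with hD
  have hDc : IsClosed (D : Set H) := by
    have h1 : (D : Set H) = ((N ⊔ K : Submodule ℂ H) : Set H) ∩ (Kᗮ : Set H) := rfl
    rw [h1]
    exact hNK.inter K.isClosed_orthogonal
  have hTD : T '' (N : Set H) = T '' (D : Set H) := by
    apply subset_antisymm
    · rintro _ ⟨n, hn, rfl⟩
      have hmem : n - projCLM K hKc n ∈ D := by
        refine ⟨Submodule.sub_mem _ (Submodule.mem_sup_left hn)
          (Submodule.mem_sup_right (projCLM_mem K hKc n)), ?_⟩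
        exact sub_projCLM_mem_orthogonal K hKc n
      refine ⟨n - projCLM K hKc n, hmem, ?_⟩
      rw [map_sub, (show T (projCLM K hKc n) = 0 from LinearMap.mem_ker.mp (projCLM_mem K hKc n)), sub_zero]
    · rintro _ ⟨d, hd, rfl⟩
      rcases Submodule.mem_sup.mp hd.1 with ⟨n, hn, k, hk, rfl⟩
      refine ⟨n, hn, ?_⟩
      rw [map_add, (show T k = 0 from LinearMap.mem_ker.mp hk), add_zero]
  have hTN : IsClosed (T '' (N : Set H)) := by
    rw [hTD]
    exact isClosed_image_of_bound T D hDc hc (fun x hx => hbd x hx.2)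
  have htop : N ⊔ Nᗮ = ⊤ := Submodule.sup_orthogonal_of_hasOrthogonalProjection
  have hmapN : Submodule.map ((T + F : H →L[ℂ] E) : H →ₗ[ℂ] E) N
      = Submodule.map (T : H →ₗ[ℂ] E) N := by
    ext y
    simp only [Submodule.mem_map]
    constructor
    · rintro ⟨x, hx, rfl⟩
      refine ⟨x, hx, ?_⟩
      have h0 : F x = 0 := LinearMap.mem_ker.mp hx
      show T x = (T + F) x
      simp [h0]
    · rintro ⟨x, hx, rfl⟩
      refine ⟨x, hx, ?_⟩
      have h0 : F x = 0 := LinearMap.mem_ker.mp hx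
      show (T + F) x = T x
      simp [h0]
  have hr : (T + F : H →L[ℂ] E).range
      = Submodule.map (T : H →ₗ[ℂ] E) N
        ⊔ Submodule.map (((T + F : H →L[ℂ] E)) : H →ₗ[ℂ] E) Nᗮ := by
    rw [← hmapN]
    have h1 : (T + F : H →L[ℂ] E).range
        = Submodule.map (((T + F : H →L[ℂ] E)) : H →ₗ[ℂ] E) ⊤ := by
      rw [Submodule.map_top]
    rw [h1, ← htop, Submodule.map_sup]
  haveI : FiniteDimensional ℂ
      ↥(Submodule.map (((T + F : H →L[ℂ] E)) : H →ₗ[ℂ] E) Nᗮ) :=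
    Module.Finite.map Nᗮ _
  have hset : Set.range ((T + F : H →L[ℂ] E))
      = (((T + F : H →L[ℂ] E).range : Submodule ℂ E) : Set E) :=
    (LinearMap.coe_range _).symm
  rw [hset, hr]
  apply isClosed_coe_sup_fd
  have h2 : ((Submodule.map (T : H →ₗ[ℂ] E) N : Submodule ℂ E) : Set E)
      = T '' (N : Set H) := Submodule.map_coe _ _
  rw [h2]
  exact hTN

end OpAux2
section AnaAux
open scoped ENNReal

variable {H : Type*} [NormedAddCommGroup H] [InnerProductSpace ℂ H] [CompleteSpace H]
variable {ι : Type*}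

lemma rpow_toReal_two (x : ℝ) : x ^ ((2 : ℝ≥0∞)).toReal = x ^ 2 := by
  rw [ENNReal.toReal_ofNat, Real.rpow_two]

lemma le_of_sq_le_sq0 {a b : ℝ} (ha : 0 ≤ a) (hb : 0 ≤ b) (h : a ^ 2 ≤ b ^ 2) : a ≤ b := by
  nlinarith

lemma memℓp_ana (F : ι → H) (g : H) (hs : Summable fun i => ‖⟪F i, g⟫‖ ^ 2) :
    Memℓp (fun i => (⟪F i, g⟫ : ℂ)) 2 :=
  memℓp_gen (by simpa only [rpow_toReal_two] using hs)

/-- The analysis operator, as a linear map. -/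
def anaLM (F : ι → H) (hs : ∀ g : H, Summable fun i => ‖⟪F i, g⟫‖ ^ 2) :
    H →ₗ[ℂ] lp (fun _ : ι => ℂ) 2 where
  toFun g := ⟨fun i => ⟪F i, g⟫, memℓp_ana F g (hs g)⟩
  map_add' x y := by
    apply lp.ext
    funext i
    simp only [lp.coeFn_add, Pi.add_apply]
    exact inner_add_right _ _ _
  map_smul' c x := by
    apply lp.ext
    funext i
    simp only [lp.coeFn_smul, Pi.smul_apply, RingHom.id_apply]
    exact inner_smul_right _ _ _

lemma anaLM_apply (F : ι → H) (hs : ∀ g : H, Summable fun i => ‖⟪F i, g⟫‖ ^ 2) (g : H) (i : ι) :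
    (anaLM F hs g : ∀ _ : ι, ℂ) i = ⟪F i, g⟫ := rfl

lemma norm_sq_eq_tsum (x : lp (fun _ : ι => ℂ) 2) :
    ‖x‖ ^ 2 = ∑' i, ‖(x : ∀ _ : ι, ℂ) i‖ ^ 2 := by
  have h := lp.norm_rpow_eq_tsum (p := 2) (by rw [ENNReal.toReal_ofNat]; norm_num) x
  simpa only [rpow_toReal_two] using h

lemma summable_sq_of_lp (x : lp (fun _ : ι => ℂ) 2) :
    Summable fun i => ‖(x : ∀ _ : ι, ℂ) i‖ ^ 2 := by
  have h := (lp.memℓp x).summable (p := 2) (by rw [ENNReal.toReal_ofNat]; norm_num)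
  simpa only [rpow_toReal_two] using h

/-- The analysis operator, as a continuous linear map. -/
def anaCLM (F : ι → H) (C : ℝ) (hC : 0 ≤ C)
    (hs : ∀ g : H, Summable fun i => ‖⟪F i, g⟫‖ ^ 2)
    (hb : ∀ g : H, ∑' i, ‖⟪F i, g⟫‖ ^ 2 ≤ C * ‖g‖ ^ 2) :
    H →L[ℂ] lp (fun _ : ι => ℂ) 2 :=
  (anaLM F hs).mkContinuous (Real.sqrt C) (fun g => by
    refine le_of_sq_le_sq0 (norm_nonneg _) (by positivity) ?_
    rw [norm_sq_eq_tsum, mul_pow, Real.sq_sqrt hC]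
    have h1 : ∀ i, ‖(anaLM F hs g : ∀ _ : ι, ℂ) i‖ ^ 2 = ‖⟪F i, g⟫‖ ^ 2 := fun i => rfl
    calc (∑' i, ‖(anaLM F hs g : ∀ _ : ι, ℂ) i‖ ^ 2) = ∑' i, ‖⟪F i, g⟫‖ ^ 2 :=
          tsum_congr h1
      _ ≤ C * ‖g‖ ^ 2 := hb g)

lemma anaCLM_apply (F : ι → H) (C : ℝ) (hC : 0 ≤ C)
    (hs : ∀ g : H, Summable fun i => ‖⟪F i, g⟫‖ ^ 2)
    (hb : ∀ g : H, ∑' i, ‖⟪F i, g⟫‖ ^ 2 ≤ C * ‖g‖ ^ 2) (g : H) (i : ι) :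
    (anaCLM F C hC hs hb g : ∀ _ : ι, ℂ) i = ⟪F i, g⟫ := rfl

lemma norm_anaCLM_sq (F : ι → H) (C : ℝ) (hC : 0 ≤ C)
    (hs : ∀ g : H, Summable fun i => ‖⟪F i, g⟫‖ ^ 2)
    (hb : ∀ g : H, ∑' i, ‖⟪F i, g⟫‖ ^ 2 ≤ C * ‖g‖ ^ 2) (g : H) :
    ‖anaCLM F C hC hs hb g‖ ^ 2 = ∑' i, ‖⟪F i, g⟫‖ ^ 2 := by
  rw [norm_sq_eq_tsum]
  exact tsum_congr fun i => rfl

/-- Bessel bound for a family with square-summable norms. -/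
lemma bessel_of_sq_summable (p : ι → H) (hp : Summable fun i => ‖p i‖ ^ 2) (g : H) :
    Summable (fun i => ‖⟪p i, g⟫‖ ^ 2) ∧
      ∑' i, ‖⟪p i, g⟫‖ ^ 2 ≤ (∑' i, ‖p i‖ ^ 2) * ‖g‖ ^ 2 := by
  have hle : ∀ i, ‖⟪p i, g⟫‖ ^ 2 ≤ ‖p i‖ ^ 2 * ‖g‖ ^ 2 := by
    intro i
    have h1 : ‖⟪p i, g⟫‖ ≤ ‖p i‖ * ‖g‖ := norm_inner_le_norm _ _
    calc ‖⟪p i, g⟫‖ ^ 2 ≤ (‖p i‖ * ‖g‖) ^ 2 := pow_le_pow_left₀ (norm_nonneg _) h1 2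
      _ = ‖p i‖ ^ 2 * ‖g‖ ^ 2 := by ring
  have hsum2 : Summable fun i => ‖p i‖ ^ 2 * ‖g‖ ^ 2 := hp.mul_right _
  have hs : Summable fun i => ‖⟪p i, g⟫‖ ^ 2 :=
    Summable.of_nonneg_of_le (fun i => by positivity) hle hsum2
  refine ⟨hs, ?_⟩
  calc ∑' i, ‖⟪p i, g⟫‖ ^ 2 ≤ ∑' i, ‖p i‖ ^ 2 * ‖g‖ ^ 2 := Summable.tsum_le_tsum hle hs hsum2
    _ = (∑' i, ‖p i‖ ^ 2) * ‖g‖ ^ 2 := tsum_mul_right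

lemma sq_add_le (a b : ℝ) : (a + b) ^ 2 ≤ 2 * a ^ 2 + 2 * b ^ 2 := by nlinarith [sq_nonneg (a - b)]

/-- Bessel bound for a sum of two Bessel families. -/
lemma bessel_add {F₁ F₂ : ι → H} {g : H} {t₁ t₂ : ℝ}
    (hs₁ : Summable fun i => ‖⟪F₁ i, g⟫‖ ^ 2) (hb₁ : ∑' i, ‖⟪F₁ i, g⟫‖ ^ 2 ≤ t₁)
    (hs₂ : Summable fun i => ‖⟪F₂ i, g⟫‖ ^ 2) (hb₂ : ∑' i, ‖⟪F₂ i, g⟫‖ ^ 2 ≤ t₂) :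
    Summable (fun i => ‖⟪F₁ i + F₂ i, g⟫‖ ^ 2) ∧
      ∑' i, ‖⟪F₁ i + F₂ i, g⟫‖ ^ 2 ≤ 2 * t₁ + 2 * t₂ := by
  have hle : ∀ i, ‖⟪F₁ i + F₂ i, g⟫‖ ^ 2 ≤ 2 * ‖⟪F₁ i, g⟫‖ ^ 2 + 2 * ‖⟪F₂ i, g⟫‖ ^ 2 := by
    intro i
    have h1 : ‖⟪F₁ i + F₂ i, g⟫‖ ≤ ‖⟪F₁ i, g⟫‖ + ‖⟪F₂ i, g⟫‖ := by
      rw [inner_add_left]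
      exact norm_add_le _ _
    calc ‖⟪F₁ i + F₂ i, g⟫‖ ^ 2 ≤ (‖⟪F₁ i, g⟫‖ + ‖⟪F₂ i, g⟫‖) ^ 2 :=
          pow_le_pow_left₀ (norm_nonneg _) h1 2
      _ ≤ 2 * ‖⟪F₁ i, g⟫‖ ^ 2 + 2 * ‖⟪F₂ i, g⟫‖ ^ 2 := sq_add_le _ _
  have hsum2 : Summable fun i => 2 * ‖⟪F₁ i, g⟫‖ ^ 2 + 2 * ‖⟪F₂ i, g⟫‖ ^ 2 :=
    ((hs₁.mul_left 2).add (hs₂.mul_left 2))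
  have hs : Summable fun i => ‖⟪F₁ i + F₂ i, g⟫‖ ^ 2 :=
    Summable.of_nonneg_of_le (fun i => by positivity) hle hsum2
  refine ⟨hs, ?_⟩
  calc ∑' i, ‖⟪F₁ i + F₂ i, g⟫‖ ^ 2
      ≤ ∑' i, (2 * ‖⟪F₁ i, g⟫‖ ^ 2 + 2 * ‖⟪F₂ i, g⟫‖ ^ 2) := Summable.tsum_le_tsum hle hs hsum2
    _ = 2 * (∑' i, ‖⟪F₁ i, g⟫‖ ^ 2) + 2 * (∑' i, ‖⟪F₂ i, g⟫‖ ^ 2) := by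
        rw [Summable.tsum_add (hs₁.mul_left 2) (hs₂.mul_left 2), tsum_mul_left, tsum_mul_left]
    _ ≤ 2 * t₁ + 2 * t₂ := by
        have : 0 ≤ ∑' i, ‖⟪F₁ i, g⟫‖ ^ 2 := tsum_nonneg (fun i => sq_nonneg ‖⟪F₁ i, g⟫‖)
        nlinarith

end AnaAux
section Core

open scoped ENNReal

variable {H : Type*} [NormedAddCommGroup H] [InnerProductSpace ℂ H] [CompleteSpace H]
variable {ι : Type*}

lemma closedSpan_isClosed (s : Set H) : IsClosed ((closedSpan s : Submodule ℂ H) : Set H) :=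
  Submodule.isClosed_topologicalClosure _

lemma mem_closedSpan {s : Set H} {x : H} (hx : x ∈ s) : x ∈ closedSpan s :=
  (Submodule.le_topologicalClosure _) (Submodule.subset_span hx)

lemma closedSpan_mono {s t : Set H} (h : s ⊆ t) : closedSpan s ≤ closedSpan t :=
  Submodule.topologicalClosure_mono (Submodule.span_mono h)

set_option maxHeartbeats 2000000 in
/-- **Core perturbation theorem.** If `F'` is a frame sequence and `F` differs from `F'` by a
square-summable perturbation taking values in a fixed finite-dimensional subspace `W`, then `F`
is a frame sequence (for suitable bounds). -/
theorem core_frameSequence (F F' : ι → H) (A B : ℝ) (hA : 0 < A) (hB : 0 < B)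
    (hfs : IsFrameSequence F' A B) (W : Submodule ℂ H) (hWfd : FiniteDimensional ℂ W)
    (h2 : ∀ i, F i - F' i ∈ W) (h3 : Summable fun i => ‖F i - F' i‖ ^ 2) :
    ∃ A' B' : ℝ, 0 < A' ∧ 0 < B' ∧ IsFrameSequence F A' B' := by
  classical
  haveI := hWfd
  set M₀ := closedSpan (Set.range F') with hM₀
  have hM₀c : IsClosed ((M₀ : Submodule ℂ H) : Set H) := closedSpan_isClosed _
  have hmem₀ : ∀ i, F' i ∈ M₀ := hfs.1
  have key₀ : ∀ (g : H) (i : ι), (⟪F' i, g⟫ : ℂ) = ⟪F' i, projCLM M₀ hM₀c g⟫ := by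
    intro g i
    have h4 : (⟪F' i, g - projCLM M₀ hM₀c g⟫ : ℂ) = 0 :=
      Submodule.inner_right_of_mem_orthogonal (hmem₀ i) (sub_projCLM_mem_orthogonal _ _ _)
    rw [inner_sub_right] at h4
    linear_combination h4
  -- Bessel bounds for F' on all of H
  have hs' : ∀ g : H, Summable fun i => ‖(⟪F' i, g⟫ : ℂ)‖ ^ 2 := by
    intro g
    have h4 := (hfs.2 (projCLM M₀ hM₀c g) (projCLM_mem _ _ _)).1
    refine h4.congr fun i => ?_
    rw [← norm_inner_symm, ← key₀]
  have hb' : ∀ g : H, ∑' i, ‖(⟪F' i, g⟫ : ℂ)‖ ^ 2 ≤ B * ‖g‖ ^ 2 := by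
    intro g
    obtain ⟨-, -, h5⟩ := hfs.2 (projCLM M₀ hM₀c g) (projCLM_mem _ _ _)
    have h6 : ∑' i, ‖(⟪F' i, g⟫ : ℂ)‖ ^ 2
        = ∑' i, ‖(⟪projCLM M₀ hM₀c g, F' i⟫ : ℂ)‖ ^ 2 := by
      refine tsum_congr fun i => ?_
      rw [key₀ g i, norm_inner_symm]
    rw [h6]
    calc ∑' i, ‖(⟪projCLM M₀ hM₀c g, F' i⟫ : ℂ)‖ ^ 2 ≤ B * ‖projCLM M₀ hM₀c g‖ ^ 2 := h5
      _ ≤ B * ‖g‖ ^ 2 := by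
          have h' := norm_projCLM_le M₀ hM₀c g
          have hn : 0 ≤ ‖projCLM M₀ hM₀c g‖ := norm_nonneg _
          have h'' : ‖projCLM M₀ hM₀c g‖ ^ 2 ≤ ‖g‖ ^ 2 := by nlinarith
          exact mul_le_mul_of_nonneg_left h'' hB.le
  set T := anaCLM F' B hB.le hs' hb' with hT
  -- Bessel bounds for the perturbation
  set R := ∑' i, ‖F i - F' i‖ ^ 2 with hRdef
  have hR0 : 0 ≤ R := tsum_nonneg fun i => sq_nonneg _
  have hsp : ∀ g : H, Summable fun i => ‖(⟪F i - F' i, g⟫ : ℂ)‖ ^ 2 :=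
    fun g => (bessel_of_sq_summable _ h3 g).1
  have hbp : ∀ g : H, ∑' i, ‖(⟪F i - F' i, g⟫ : ℂ)‖ ^ 2 ≤ R * ‖g‖ ^ 2 :=
    fun g => (bessel_of_sq_summable _ h3 g).2
  -- Bessel bounds for F
  have hFdecomp : ∀ i, F i = F' i + (F i - F' i) := fun i => by abel
  have hsF : ∀ g : H, Summable fun i => ‖(⟪F i, g⟫ : ℂ)‖ ^ 2 := by
    intro g
    have h7 := (bessel_add (hs' g) (hb' g) (hsp g) (hbp g)).1
    refine h7.congr fun i => ?_
    rw [← hFdecomp]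
  have hbF : ∀ g : H, ∑' i, ‖(⟪F i, g⟫ : ℂ)‖ ^ 2 ≤ (2 * (B * ‖g‖ ^ 2) + 2 * (R * ‖g‖ ^ 2)) := by
    intro g
    have h7 := (bessel_add (hs' g) (hb' g) (hsp g) (hbp g)).2
    have h8 : ∑' i, ‖(⟪F i, g⟫ : ℂ)‖ ^ 2
        = ∑' i, ‖(⟪F' i + (F i - F' i), g⟫ : ℂ)‖ ^ 2 :=
      tsum_congr fun i => by rw [← hFdecomp]
    rw [h8]
    exact h7
  have hbF' : ∀ g : H, ∑' i, ‖(⟪F i, g⟫ : ℂ)‖ ^ 2 ≤ (2 * B + 2 * R) * ‖g‖ ^ 2 := by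
    intro g
    calc ∑' i, ‖(⟪F i, g⟫ : ℂ)‖ ^ 2 ≤ 2 * (B * ‖g‖ ^ 2) + 2 * (R * ‖g‖ ^ 2) := hbF g
      _ = (2 * B + 2 * R) * ‖g‖ ^ 2 := by ring
  set V := anaCLM F (2 * B + 2 * R) (by positivity) hsF hbF' with hV
  set Q := V - T with hQ
  -- Q vanishes on Wᗮ and has finite rank
  have hQzero : ∀ g ∈ Wᗮ, Q g = 0 := by
    intro g hg
    apply lp.ext
    funext i
    have h9 : (Q g : ∀ _ : ι, ℂ) i = (V g : ∀ _ : ι, ℂ) i - (T g : ∀ _ : ι, ℂ) i := by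
      rw [hQ]
      simp [lp.coeFn_sub]
    rw [h9, anaCLM_apply, anaCLM_apply]
    have h10 : (⟪F i - F' i, g⟫ : ℂ) = 0 :=
      Submodule.inner_right_of_mem_orthogonal (h2 i) hg
    rw [inner_sub_left] at h10
    show (⟪F i, g⟫ : ℂ) - ⟪F' i, g⟫ = (0 : lp (fun _ : ι => ℂ) 2) i
    have h11 : ((0 : lp (fun _ : ι => ℂ) 2) : ∀ _ : ι, ℂ) i = 0 := by
      rw [lp.coeFn_zero]; rfl
    rw [h11]
    linear_combination h10
  have hQfr : FiniteDimensional ℂ ↥(Q.range) := by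
    have hWc : IsClosed (W : Set H) := Submodule.closed_of_finiteDimensional W
    haveI : CompleteSpace W := hWc.completeSpace_coe
    have htop : W ⊔ Wᗮ = ⊤ := Submodule.sup_orthogonal_of_hasOrthogonalProjection
    have h6 : Q.range
        = Submodule.map (Q : H →ₗ[ℂ] lp (fun _ : ι => ℂ) 2) W
          ⊔ Submodule.map (Q : H →ₗ[ℂ] lp (fun _ : ι => ℂ) 2) Wᗮ := by
      have h61 : Q.range
          = Submodule.map (Q : H →ₗ[ℂ] lp (fun _ : ι => ℂ) 2) ⊤ := by
        rw [Submodule.map_top]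
      rw [h61, ← htop, Submodule.map_sup]
    have h7 : Submodule.map (Q : H →ₗ[ℂ] lp (fun _ : ι => ℂ) 2) Wᗮ = ⊥ := by
      rw [Submodule.eq_bot_iff]
      rintro _ ⟨g, hg, rfl⟩
      exact hQzero g hg
    rw [h6, h7, sup_bot_eq]
    exact Module.Finite.map W _
  -- T has closed range
  have hTM : ∀ g : H, T g = T (projCLM M₀ hM₀c g) := by
    intro g
    apply lp.ext
    funext i
    show (⟪F' i, g⟫ : ℂ) = ⟪F' i, projCLM M₀ hM₀c g⟫
    exact key₀ g i
  have hrT : Set.range T = T '' (M₀ : Set H) := by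
    apply subset_antisymm
    · rintro _ ⟨g, rfl⟩
      exact ⟨projCLM M₀ hM₀c g, projCLM_mem _ _ _, (hTM g).symm⟩
    · rintro _ ⟨x, _, rfl⟩
      exact ⟨x, rfl⟩
  have hlowT : ∀ x ∈ M₀, ‖x‖ ≤ (Real.sqrt A)⁻¹ * ‖T x‖ := by
    intro x hx
    obtain ⟨-, h12, -⟩ := hfs.2 x hx
    have h13 : ‖T x‖ ^ 2 = ∑' i, ‖(⟪F' i, x⟫ : ℂ)‖ ^ 2 := norm_anaCLM_sq _ _ _ _ _ _
    have h14 : ∑' i, ‖(⟪F' i, x⟫ : ℂ)‖ ^ 2 = ∑' i, ‖(⟪x, F' i⟫ : ℂ)‖ ^ 2 :=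
      tsum_congr fun i => by rw [norm_inner_symm]
    have h15 : A * ‖x‖ ^ 2 ≤ ‖T x‖ ^ 2 := by rw [h13, h14]; exact h12
    refine le_of_sq_le_sq0 (norm_nonneg _) (by positivity) ?_
    rw [mul_pow, inv_pow, Real.sq_sqrt hA.le]
    rw [inv_mul_eq_div, le_div_iff₀ hA]
    nlinarith
  have hTclosed : IsClosed (Set.range T) := by
    rw [hrT]
    exact isClosed_image_of_bound T M₀ hM₀c (by positivity) hlowT
  have hVTQ : V = T + Q := by rw [hQ]; abel
  have hVclosed : IsClosed (Set.range V) := by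
    rw [hVTQ]
    exact isClosed_range_add_finiteRank T Q hTclosed hQfr
  obtain ⟨c, hc, hbdV⟩ := exists_norm_le_of_isClosed_range V hVclosed
  set M := closedSpan (Set.range F) with hM
  -- identify (ker V)ᗮ with M
  have hker : V.ker = (Submodule.span ℂ (Set.range F))ᗮ := by
    ext g
    constructor
    · intro hg
      have hg0 : V g = 0 := hg
      rw [Submodule.mem_orthogonal]
      intro u hu
      induction hu using Submodule.span_induction with
      | mem x h =>
          obtain ⟨i, rfl⟩ := h
          have := congrFun (congrArg (Subtype.val) hg0) i
          simp at this; exact this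
      | zero => exact inner_zero_left _
      | add x y hx hy ihx ihy => rw [inner_add_left, ihx, ihy, add_zero]
      | smul a x hx ih => rw [inner_smul_left, ih, mul_zero]
    · intro hg
      have h16 : V g = 0 := by
        apply lp.ext
        funext i
        have h17 : F i ∈ Submodule.span ℂ (Set.range F) :=
          Submodule.subset_span ⟨i, rfl⟩
        have h18 := (Submodule.mem_orthogonal _ g).mp hg (F i) h17
        show (⟪F i, g⟫ : ℂ) = ((0 : lp (fun _ : ι => ℂ) 2) : ∀ _ : ι, ℂ) i
        rw [h18, lp.coeFn_zero]
        rfl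
      exact h16
  have hkerperp : (V.ker)ᗮ = M := by
    rw [hker, Submodule.orthogonal_orthogonal_eq_closure]
    rfl
  refine ⟨(c ^ 2)⁻¹, ‖V‖ ^ 2 + 1, by positivity, by positivity, ?_, ?_⟩
  · exact fun i => mem_closedSpan ⟨i, rfl⟩
  · intro g hg
    have hg' : g ∈ (V.ker)ᗮ := by rw [hkerperp]; exact hg
    have hflip : (fun i => ‖(⟪g, F i⟫ : ℂ)‖ ^ 2) = fun i => ‖(⟪F i, g⟫ : ℂ)‖ ^ 2 := by
      funext i
      rw [norm_inner_symm]
    have hVg : ‖V g‖ ^ 2 = ∑' i, ‖(⟪F i, g⟫ : ℂ)‖ ^ 2 := norm_anaCLM_sq _ _ _ _ _ _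
    have htsum : ∑' i, ‖(⟪g, F i⟫ : ℂ)‖ ^ 2 = ‖V g‖ ^ 2 := by rw [hVg, hflip]
    refine ⟨by rw [hflip]; exact hsF g, ?_, ?_⟩
    · rw [htsum]
      have h19 := hbdV g hg'
      have h20 : ‖g‖ ^ 2 ≤ c ^ 2 * ‖V g‖ ^ 2 := by nlinarith [norm_nonneg g, norm_nonneg (V g)]
      rw [inv_mul_le_iff₀ (by positivity)]
      calc ‖g‖ ^ 2 ≤ c ^ 2 * ‖V g‖ ^ 2 := h20
        _ = c ^ 2 * ‖V g‖ ^ 2 := rfl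
    · rw [htsum]
      have h21 := V.le_opNorm g
      have h22 : ‖V g‖ ^ 2 ≤ ‖V‖ ^ 2 * ‖g‖ ^ 2 := by nlinarith [norm_nonneg (V g), norm_nonneg g, V.opNorm_nonneg]
      nlinarith [sq_nonneg ‖g‖]

end Core
section Ext

variable {H : Type*} [NormedAddCommGroup H] [InnerProductSpace ℂ H] [CompleteSpace H]

/-- Extending a frame sequence by zero vectors along an injection preserves the frame
sequence property with the same bounds. -/
lemma isFrameSequence_extend {κ ι : Type*} (u : κ → ι) (hu : Function.Injective u)
    (F₀ : κ → H) (F' : ι → H) (hkey : ∀ k, F' (u k) = F₀ k)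
    (hzero : ∀ i, i ∉ Set.range u → F' i = 0)
    (A B : ℝ) (h : IsFrameSequence F₀ A B) :
    IsFrameSequence F' A B := by
  classical
  have hspan : closedSpan (Set.range F') = closedSpan (Set.range F₀) := by
    apply le_antisymm
    · apply Submodule.topologicalClosure_minimal
      · rw [Submodule.span_le]
        rintro _ ⟨i, rfl⟩
        by_cases h' : i ∈ Set.range u
        · obtain ⟨k, rfl⟩ := h'
          rw [hkey k]
          exact mem_closedSpan ⟨k, rfl⟩
        · rw [hzero i h']
          exact Submodule.zero_mem _
      · exact closedSpan_isClosed _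
    · apply Submodule.topologicalClosure_minimal
      · rw [Submodule.span_le]
        rintro _ ⟨k, rfl⟩
        rw [← hkey k]
        exact mem_closedSpan ⟨u k, rfl⟩
      · exact closedSpan_isClosed _
  constructor
  · exact fun i => mem_closedSpan ⟨i, rfl⟩
  · intro g hg
    have hg₀ : g ∈ closedSpan (Set.range F₀) := by rw [← hspan]; exact hg
    obtain ⟨hs, hl, hub⟩ := h.2 g hg₀
    have hzero' : ∀ i ∉ Set.range u, ‖(⟪g, F' i⟫ : ℂ)‖ ^ 2 = 0 := by
      intro i hi
      rw [hzero i hi, inner_zero_right]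
      simp
    have hcomp : ∀ k, ‖(⟪g, F' (u k)⟫ : ℂ)‖ ^ 2 = ‖(⟪g, F₀ k⟫ : ℂ)‖ ^ 2 := fun k => by
      rw [hkey]
    have hsum : Summable (fun i => ‖(⟪g, F' i⟫ : ℂ)‖ ^ 2) := by
      rw [← Function.Injective.summable_iff hu hzero']
      exact hs.congr fun k => (hcomp k).symm
    have hsupp : Function.support (fun i => ‖(⟪g, F' i⟫ : ℂ)‖ ^ 2) ⊆ Set.range u := by
      intro i hi
      by_contra hcon
      exact hi (hzero' i hcon)
    have h1 : ∑' k, ‖(⟪g, F' (u k)⟫ : ℂ)‖ ^ 2 = ∑' i, ‖(⟪g, F' i⟫ : ℂ)‖ ^ 2 :=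
      Function.Injective.tsum_eq hu hsupp
    have htsum : ∑' i, ‖(⟪g, F' i⟫ : ℂ)‖ ^ 2 = ∑' k, ‖(⟪g, F₀ k⟫ : ℂ)‖ ^ 2 := by
      rw [← h1]
      exact tsum_congr fun k => hcomp k
    exact ⟨hsum, by rw [htsum]; exact hl, by rw [htsum]; exact hub⟩

end Ext
section Proj

variable {H : Type*} [NormedAddCommGroup H] [InnerProductSpace ℂ H] [CompleteSpace H]

lemma projSpan_mem (s : Set H) (x : H) : projSpan s x ∈ closedSpan s := by
  haveI : CompleteSpace (closedSpan s : Submodule ℂ H) :=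
    (Submodule.isClosed_topologicalClosure _).completeSpace_coe
  exact (orthogonalProjection (closedSpan s) x).2

end Proj

/-- **Theorem 3.2, (2) ⇒ (1).** If a sequence `f` splits into three families — a Riesz basis
`(g n) = (f (e n))` (indexed by `Δg`), finitely many vectors (indexed by `Λ`) of infinite support
with respect to the Riesz basis (i.e. not lying in the algebraic span of the basis vectors), and
vectors `(h i)_{i ∈ Γ}` — and there is `m` such that, with `G` the span of the first `m` basis
vectors and `h i = h¹ i + h² i` the orthogonal decomposition with `h² i ∈ G`, `h¹ i ∈ Gᗮ`, one
has `∑_{i ∈ Γ} ‖h² i‖² < ∞` and `((g n)_n, (h¹ i)_{i ∈ Γ})` is a Riesz frame for `H`, then `f`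
is a frame for `H` with the subframe property. -/
theorem frame_with_subframe_property_of_structure
    (f : ℕ → H) (Δg Γ Λ : Set ℕ)
    (hpart : Δg ∪ Γ ∪ Λ = Set.univ) (hdgG : Disjoint Δg Γ) (hdgL : Disjoint Δg Λ)
    (hGL : Disjoint Γ Λ) (hΛfin : Λ.Finite)
    (e : ℕ ≃ Δg)
    (hRB : IsRieszBasis (fun n => f (e n)))
    (hΛ : ∀ i ∈ Λ, f i ∉ Submodule.span ℂ (Set.range fun n => f (e n)))
    (m : ℕ)
    (hsum : Summable (fun i : Γ =>
      ‖projSpan ((fun n => f (e n)) '' Set.Iio m) (f i)‖ ^ 2))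
    (hRF : IsRieszFrame (Sum.elim (fun n => f (e n))
      (fun i : Γ => f i - projSpan ((fun n => f (e n)) '' Set.Iio m) (f i)))) :
    (∃ A B : ℝ, 0 < A ∧ 0 < B ∧ IsFrameFor f (⊤ : Submodule ℂ H) A B) ∧
    HasSubframeProperty f := by
  classical
  obtain ⟨A, B, hA, hB, hRW⟩ := hRF
  set Gs : Set H := (fun n => f (e n)) '' Set.Iio m with hGs
  set G : Submodule ℂ H := closedSpan Gs with hG
  have hGfin : FiniteDimensional ℂ G := by
    have hfin : Gs.Finite := (Set.finite_Iio m).image _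
    haveI h1 : FiniteDimensional ℂ (Submodule.span ℂ Gs) :=
      FiniteDimensional.span_of_finite ℂ hfin
    have h2 : closedSpan Gs = Submodule.span ℂ Gs :=
      (Submodule.closed_of_finiteDimensional (Submodule.span ℂ Gs)).submodule_topologicalClosure_eq
    rw [hG, h2]
    exact h1
  set W : Submodule ℂ H := G ⊔ Submodule.span ℂ (f '' Λ) with hW
  haveI hWfd : FiniteDimensional ℂ W := by
    haveI : FiniteDimensional ℂ (Submodule.span ℂ (f '' Λ)) :=
      FiniteDimensional.span_of_finite ℂ (hΛfin.image f)
    haveI := hGfin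
    infer_instance
  -- main claim: every subfamily is a frame sequence
  have main : ∀ Δ : Set ℕ, ∃ A' B' : ℝ, 0 < A' ∧ 0 < B' ∧
      IsFrameSequence (fun i : Δ => f i) A' B' := by
    intro Δ
    set Δ' : Set (ℕ ⊕ ↥Γ) :=
      {x | Sum.elim (fun n => ((e n : ℕ) ∈ Δ)) (fun (i : ↥Γ) => ((i : ℕ) ∈ Δ)) x} with hΔ'
    set F₀ : ↥Δ' → H := fun k =>
      Sum.elim (fun n => f (e n))
        (fun i : Γ => f i - projSpan Gs (f i)) k.1 with hF₀
    have hfs₀ : IsFrameSequence F₀ A B := hRW.2 Δ'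
    set u : ↥Δ' → ↥Δ := fun k =>
      ⟨Sum.elim (fun n => (e n : ℕ)) (fun (i : ↥Γ) => (i : ℕ)) k.1, by
        rcases k with ⟨x, hx⟩
        rcases x with n | i
        · exact hx
        · exact hx⟩ with hu
    have huinj : Function.Injective u := by
      rintro ⟨x, hx⟩ ⟨y, hy⟩ hxy
      have h1 : Sum.elim (fun n => (e n : ℕ)) (fun (i : ↥Γ) => (i : ℕ)) x
          = Sum.elim (fun n => (e n : ℕ)) (fun (i : ↥Γ) => (i : ℕ)) y := congrArg Subtype.val hxy
      apply Subtype.ext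
      rcases x with n | i <;> rcases y with n' | i'
      · simp only [Sum.elim_inl] at h1
        have h2 : e n = e n' := Subtype.ext h1
        exact congrArg Sum.inl (e.injective h2)
      · exfalso
        simp only [Sum.elim_inl, Sum.elim_inr] at h1
        exact Set.disjoint_left.mp hdgG (h1 ▸ (e n).2) i'.2
      · exfalso
        simp only [Sum.elim_inl, Sum.elim_inr] at h1
        exact Set.disjoint_left.mp hdgG (h1 ▸ (e n').2) i.2
      · simp only [Sum.elim_inr] at h1
        exact congrArg Sum.inr (Subtype.ext h1)
    set F' : ↥Δ → H := fun d => if h' : ∃ k, u k = d then F₀ h'.choose else 0 with hF'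
    have hkeyu : ∀ k, F' (u k) = F₀ k := by
      intro k
      have hex : ∃ k', u k' = u k := ⟨k, rfl⟩
      have h1 : F' (u k) = F₀ hex.choose := dif_pos hex
      rw [h1, huinj hex.choose_spec]
    have hzerou : ∀ d, d ∉ Set.range u → F' d = 0 := by
      intro d hd
      exact dif_neg (by simpa [Set.mem_range] using hd)
    have hfs' : IsFrameSequence F' A B :=
      isFrameSequence_extend u huinj F₀ F' hkeyu hzerou A B hfs₀
    -- value of F₀ at preimages
    have hval : ∀ (k : ↥Δ') (d : ↥Δ), u k = d →
        ((d : ℕ) ∈ Δg → F₀ k = f ↑d) ∧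
        ((d : ℕ) ∈ Γ → F₀ k = f ↑d - projSpan Gs (f ↑d)) := by
      rintro ⟨x, hx⟩ d hk
      have h1 : Sum.elim (fun n => (e n : ℕ)) (fun (i : ↥Γ) => (i : ℕ)) x = (d : ℕ) :=
        congrArg Subtype.val hk
      rcases x with n | i
      · simp only [Sum.elim_inl] at h1
        constructor
        · intro _
          show f (e n) = f ↑d
          rw [h1]
        · intro hdΓ
          exact absurd (h1 ▸ (e n).2) (fun h => Set.disjoint_left.mp hdgG h hdΓ)
      · simp only [Sum.elim_inr] at h1
        constructor
        · intro hdg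
          exact absurd (h1 ▸ i.2) (fun h => Set.disjoint_left.mp hdgG hdg h)
        · intro _
          show f ↑i - projSpan Gs (f ↑i) = f ↑d - projSpan Gs (f ↑d)
          rw [h1]
    have hex_dg : ∀ d : ↥Δ, (d : ℕ) ∈ Δg → ∃ k, u k = d := by
      intro d hd
      refine ⟨⟨Sum.inl (e.symm ⟨(d : ℕ), hd⟩), ?_⟩, ?_⟩
      · show ((e (e.symm ⟨(d : ℕ), hd⟩) : ℕ) ∈ Δ)
        rw [e.apply_symm_apply]
        exact d.2
      · apply Subtype.ext
        show (e (e.symm ⟨(d : ℕ), hd⟩) : ℕ) = (d : ℕ)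
        rw [e.apply_symm_apply]
    have hex_g : ∀ d : ↥Δ, (d : ℕ) ∈ Γ → ∃ k, u k = d := by
      intro d hd
      exact ⟨⟨Sum.inr ⟨(d : ℕ), hd⟩, d.2⟩, Subtype.ext rfl⟩
    have hnex_l : ∀ d : ↥Δ, (d : ℕ) ∈ Λ → ¬ ∃ k, u k = d := by
      rintro d hd ⟨⟨x, hx⟩, hk⟩
      have h1 : Sum.elim (fun n => (e n : ℕ)) (fun (i : ↥Γ) => (i : ℕ)) x = (d : ℕ) :=
        congrArg Subtype.val hk
      rcases x with n | i
      · simp only [Sum.elim_inl] at h1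
        exact Set.disjoint_left.mp hdgL (h1 ▸ (e n).2) hd
      · simp only [Sum.elim_inr] at h1
        exact Set.disjoint_left.mp hGL (h1 ▸ i.2) hd
    -- the difference of the families
    have hdiff : ∀ d : ↥Δ,
        ((d : ℕ) ∈ Δg → f ↑d - F' d = 0) ∧
        ((d : ℕ) ∈ Γ → f ↑d - F' d = projSpan Gs (f ↑d)) ∧
        ((d : ℕ) ∈ Λ → f ↑d - F' d = f ↑d) := by
      intro d
      refine ⟨fun hd => ?_, fun hd => ?_, fun hd => ?_⟩
      · have hex := hex_dg d hd
        have h5 : F' d = F₀ hex.choose := dif_pos hex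
        rw [h5, (hval hex.choose d hex.choose_spec).1 hd, sub_self]
      · have hex := hex_g d hd
        have h5 : F' d = F₀ hex.choose := dif_pos hex
        rw [h5, (hval hex.choose d hex.choose_spec).2 hd]
        abel
      · have h5 : F' d = 0 := dif_neg (hnex_l d hd)
        rw [h5, sub_zero]
    have hd3 : ∀ d : ↥Δ, (d : ℕ) ∈ Δg ∪ Γ ∪ Λ := by
      intro d
      rw [hpart]
      trivial
    have h2core : ∀ d : ↥Δ, f ↑d - F' d ∈ W := by
      intro d
      rcases hd3 d with (hd | hd) | hd
      · rw [(hdiff d).1 hd]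
        exact W.zero_mem
      · rw [(hdiff d).2.1 hd]
        exact (le_sup_left : G ≤ W) (projSpan_mem Gs (f ↑d))
      · rw [(hdiff d).2.2 hd]
        exact (le_sup_right : Submodule.span ℂ (f '' Λ) ≤ W)
          (Submodule.subset_span ⟨↑d, hd, rfl⟩)
    have h3core : Summable fun d : ↥Δ => ‖f ↑d - F' d‖ ^ 2 := by
      set φ : ℕ → ℝ := fun n => ‖projSpan Gs (f n)‖ ^ 2 with hφdef
      set ψ : ℕ → ℝ := fun n => ‖f n‖ ^ 2 with hψdef
      have hφ : Summable (Γ.indicator φ) := summable_subtype_iff_indicator.mp hsum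
      have hψ : Summable (Λ.indicator ψ) := summable_subtype_iff_indicator.mp (hΛfin.summable ψ)
      have hq : Summable (fun n => Γ.indicator φ n + Λ.indicator ψ n) := hφ.add hψ
      have hqsub : Summable (fun d : ↥Δ => Γ.indicator φ ↑d + Λ.indicator ψ ↑d) :=
        hq.subtype Δ
      refine Summable.of_nonneg_of_le (fun d => sq_nonneg _) ?_ hqsub
      intro d
      have hφ0 : ∀ n ∈ Γ, 0 ≤ φ n := fun n _ => sq_nonneg _
      have hψ0 : ∀ n ∈ Λ, 0 ≤ ψ n := fun n _ => sq_nonneg _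
      rcases hd3 d with (hd | hd) | hd
      · rw [(hdiff d).1 hd]
        have h7 := Set.indicator_nonneg hφ0 (d : ℕ)
        have h8 := Set.indicator_nonneg hψ0 (d : ℕ)
        simpa using add_nonneg h7 h8
      · rw [(hdiff d).2.1 hd]
        have h6 : Γ.indicator φ ↑d = φ ↑d := Set.indicator_of_mem hd φ
        rw [h6]
        exact le_add_of_nonneg_right (Set.indicator_nonneg hψ0 (d : ℕ))
      · rw [(hdiff d).2.2 hd]
        have h6 : Λ.indicator ψ ↑d = ψ ↑d := Set.indicator_of_mem hd ψ
        rw [h6]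
        exact le_add_of_nonneg_left (Set.indicator_nonneg hφ0 (d : ℕ))
    obtain ⟨A', B', hA', hB', hfsF⟩ :=
      core_frameSequence (fun d : ↥Δ => f ↑d) F' A B hA hB hfs' W hWfd h2core h3core
    exact ⟨A', B', hA', hB', hfsF⟩
  constructor
  · -- frame for the whole space, from `Δ = univ`
    obtain ⟨A', B', hA', hB', hfs⟩ := main Set.univ
    refine ⟨A', B', hA', hB', ?_⟩
    have htop : closedSpan (Set.range f) = ⊤ := by
      apply le_antisymm le_top
      rw [← hRB.1]
      exact closedSpan_mono (by rintro _ ⟨n, rfl⟩; exact ⟨(e n : ℕ), rfl⟩)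
    constructor
    · intro i
      trivial
    · intro g _
      have hg' : g ∈ closedSpan (Set.range fun i : (Set.univ : Set ℕ) => f ↑i) := by
        have hr : (Set.range fun i : (Set.univ : Set ℕ) => f ↑i) = Set.range f := by
          ext x
          constructor
          · rintro ⟨i, rfl⟩
            exact ⟨↑i, rfl⟩
          · rintro ⟨n, rfl⟩
            exact ⟨⟨n, trivial⟩, rfl⟩
        rw [hr, htop]
        trivial
      obtain ⟨hs, hl, hu2⟩ := hfs.2 g hg'
      set eqv : ℕ ≃ ↥(Set.univ : Set ℕ) := (Equiv.Set.univ ℕ).symm with heqv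
      have htr : ∑' n : ℕ, ‖(⟪g, f n⟫ : ℂ)‖ ^ 2
          = ∑' i : ↥(Set.univ : Set ℕ), ‖(⟪g, f ↑i⟫ : ℂ)‖ ^ 2 :=
        eqv.tsum_eq (fun i : ↥(Set.univ : Set ℕ) => ‖(⟪g, f ↑i⟫ : ℂ)‖ ^ 2)
      refine ⟨?_, ?_, ?_⟩
      · exact (eqv.summable_iff
          (f := fun i : ↥(Set.univ : Set ℕ) => ‖(⟪g, f ↑i⟫ : ℂ)‖ ^ 2)).mpr hs
      · rw [htr]
        exact hl
      · rw [htr]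
        exact hu2
  · intro Δ
    exact main Δ


end
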